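/- If f : ℝ → ℝ and g : ℝ → ℝ are integrable and log-concave on ℝ, then their convolution f ∗ g is log-concave on ℝ. -/

import Mathlib

open MeasureTheory

/-- The convolution `(f ∗ g)(t) = ∫ f(t − τ) g(τ) dτ`. -/
noncomputable def conv (f g : ℝ → ℝ) (t : ℝ) : ℝ :=
  ∫ τ : ℝ, f (t - τ) * g τ

/-- `f` is log-concave on a set `S`: it is nonnegative on `S` and satisfies
`f(λx + (1−λ)y) ≥ f(x)^λ f(y)^{1−λ}` for `x, y ∈ S`, `λ ∈ [0,1]`. -/
def LogConcaveOn (S : Set ℝ) (f : ℝ → ℝ) : Prop :=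
  (∀ x ∈ S, 0 ≤ f x) ∧
    ∀ x ∈ S, ∀ y ∈ S, ∀ l : ℝ, 0 ≤ l → l ≤ 1 →
      f x ^ l * f y ^ (1 - l) ≤ f (l * x + (1 - l) * y)

section PrekopaLeindler

set_option maxHeartbeats 1000000

open Set ENNReal Pointwise


/-- 1-D "Brunn–Minkowski"-type core lemma. -/
lemma core_measure {l : ℝ} (hl0 : 0 < l) (hl1 : l < 1) {A B : Set ℝ} (C : Set ℝ)
    (hA : MeasurableSet A) (hB : MeasurableSet B)
    (hAne : A.Nonempty) (hBne : B.Nonempty)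
    (hAfin : volume A ≠ ⊤) (hBfin : volume B ≠ ⊤)
    (hsub : ∀ a ∈ A, ∀ b ∈ B, l * a + (1 - l) * b ∈ C) :
    ENNReal.ofReal l * volume A + ENNReal.ofReal (1 - l) * volume B ≤ volume C := by
  apply ENNReal.le_of_forall_pos_le_add
  intro ε hε _
  have hε2 : ((ε : ℝ≥0∞) / 2) ≠ 0 := by
    simp [ENNReal.div_eq_zero_iff, hε.ne']
  obtain ⟨K, hKA, hKc, hKv⟩ := hA.exists_isCompact_lt_add hAfin hε2
  obtain ⟨L, hLB, hLc, hLv⟩ := hB.exists_isCompact_lt_add hBfin hε2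
  obtain ⟨a₀, ha₀⟩ := hAne
  obtain ⟨b₀, hb₀⟩ := hBne
  set K' : Set ℝ := K ∪ {a₀} with hK'def
  set L' : Set ℝ := L ∪ {b₀} with hL'def
  have hK'c : IsCompact K' := hKc.union isCompact_singleton
  have hL'c : IsCompact L' := hLc.union isCompact_singleton
  have hK'A : K' ⊆ A := union_subset hKA (singleton_subset_iff.mpr ha₀)
  have hL'B : L' ⊆ B := union_subset hLB (singleton_subset_iff.mpr hb₀)
  have hK'ne : K'.Nonempty := ⟨a₀, Or.inr rfl⟩
  have hL'ne : L'.Nonempty := ⟨b₀, Or.inr rfl⟩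
  -- the scaled sets
  set P := l • K' with hPdef
  set Q := (1 - l) • L' with hQdef
  have hPc : IsCompact P := hK'c.smul l
  have hQc : IsCompact Q := hL'c.smul (1 - l)
  have hPne : P.Nonempty := hK'ne.smul_set
  have hQne : Q.Nonempty := hL'ne.smul_set
  have hPQC : P + Q ⊆ C := by
    rintro x ⟨p, hp, q, hq, rfl⟩
    obtain ⟨k, hk, rfl⟩ := hp
    obtain ⟨m, hm, rfl⟩ := hq
    exact hsub k (hK'A hk) m (hL'B hm)
  -- volume of scaled sets
  have hvolP : volume P = ENNReal.ofReal l * volume K' := by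
    rw [hPdef, Measure.addHaar_smul_of_nonneg volume hl0.le K']
    simp
  have hvolQ : volume Q = ENNReal.ofReal (1 - l) * volume L' := by
    rw [hQdef, Measure.addHaar_smul_of_nonneg volume (by linarith : (0:ℝ) ≤ 1 - l) L']
    simp
  -- key: volume (P + Q) ≥ volume P + volume Q
  have hkey : volume P + volume Q ≤ volume (P + Q) := by
    set p' := sSup P with hp'def
    set q' := sInf Q with hq'def
    have hp'P : p' ∈ P := hPc.sSup_mem hPne
    have hq'Q : q' ∈ Q := hQc.sInf_mem hQne
    set S : Set ℝ := (fun x => x + q') '' P with hSdef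
    set T : Set ℝ := (fun x => p' + x) '' Q with hTdef
    have hSsub : S ⊆ P + Q := by
      rintro x ⟨p, hp, rfl⟩; exact add_mem_add hp hq'Q
    have hTsub : T ⊆ P + Q := by
      rintro x ⟨q, hq, rfl⟩; exact add_mem_add hp'P hq
    have hST : S ∩ T ⊆ {p' + q'} := by
      rintro x ⟨⟨p, hp, rfl⟩, ⟨q, hq, hx⟩⟩
      have h1 : p ≤ p' := le_csSup hPc.bddAbove hp
      have h2 : q' ≤ q := csInf_le hQc.bddBelow hq
      have hx' : p' + q = p + q' := hx
      have hp' : p = p' := by linarith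
      have hq'' : q = q' := by linarith
      simp [hp', hq'', Set.mem_singleton_iff]
    have hTm : MeasurableSet T :=
      ((hQc.image (continuous_add_left p')).isClosed).measurableSet
    have hvolS : volume S = volume P := by
      rw [hSdef, Set.image_add_right]
      exact measure_preimage_add_right volume (-q') P
    have hvolT : volume T = volume Q := by
      rw [hTdef, Set.image_add_left]
      exact measure_preimage_add volume (-p') Q
    calc volume P + volume Q = volume S + volume T := by rw [hvolS, hvolT]
      _ = volume (S ∪ T) + volume (S ∩ T) := (measure_union_add_inter S hTm).symm
      _ ≤ volume (P + Q) + volume {p' + q'} :=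
          add_le_add (measure_mono (union_subset hSsub hTsub)) (measure_mono hST)
      _ = volume (P + Q) := by simp
  have hl' : ENNReal.ofReal l ≤ 1 := by
    rw [ENNReal.ofReal_le_one]; linarith
  have hl'' : ENNReal.ofReal (1 - l) ≤ 1 := by
    rw [ENNReal.ofReal_le_one]; linarith
  have hKK' : volume A ≤ volume K' + ε / 2 :=
    le_trans hKv.le (add_le_add (measure_mono subset_union_left) le_rfl)
  have hLL' : volume B ≤ volume L' + ε / 2 :=
    le_trans hLv.le (add_le_add (measure_mono subset_union_left) le_rfl)
  calc ENNReal.ofReal l * volume A + ENNReal.ofReal (1 - l) * volume B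
      ≤ (ENNReal.ofReal l * volume K' + ε / 2) + (ENNReal.ofReal (1 - l) * volume L' + ε / 2) := by
        gcongr
        · calc ENNReal.ofReal l * volume A ≤ ENNReal.ofReal l * (volume K' + ε / 2) := by gcongr
            _ = ENNReal.ofReal l * volume K' + ENNReal.ofReal l * (ε / 2) := by ring
            _ ≤ ENNReal.ofReal l * volume K' + ε / 2 := by
                gcongr; exact mul_le_of_le_one_left zero_le hl'
        · calc ENNReal.ofReal (1 - l) * volume B ≤ ENNReal.ofReal (1 - l) * (volume L' + ε / 2) := by gcongr
            _ = ENNReal.ofReal (1 - l) * volume L' + ENNReal.ofReal (1 - l) * (ε / 2) := by ring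
            _ ≤ ENNReal.ofReal (1 - l) * volume L' + ε / 2 := by
                gcongr; exact mul_le_of_le_one_left zero_le hl''
    _ = (volume P + volume Q) + (ε / 2 + ε / 2) := by rw [hvolP, hvolQ]; ring
    _ ≤ volume (P + Q) + ε := by rw [ENNReal.add_halves]; gcongr
    _ ≤ volume C + ε := add_le_add_left (measure_mono hPQC) ε



section scale

/-- scaling a lintegral over the line -/
lemma lintegral_comp_mul_left' {k : ℝ} (hk : 0 < k) {Ψ : ℝ → ℝ≥0∞} (hΨ : Measurable Ψ) :
    ∫⁻ u, Ψ (k * u) = ENNReal.ofReal k⁻¹ * ∫⁻ v, Ψ v := by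
  rw [← lintegral_map hΨ (measurable_const_mul k), Real.map_volume_mul_left hk.ne',
    lintegral_smul_measure, abs_of_nonneg (inv_nonneg.mpr hk.le), smul_eq_mul]

lemma setLIntegral_comp_mul {k C : ℝ} (hk : 0 < k) (hC : 0 < C) {Φ : ℝ → ℝ≥0∞}
    (hΦ : Measurable Φ) :
    ∫⁻ u in Ioo 0 C, Φ (k * u) = ENNReal.ofReal k⁻¹ * ∫⁻ v in Ioo 0 (k * C), Φ v := by
  rw [← lintegral_indicator measurableSet_Ioo (fun u => Φ (k * u)),
    ← lintegral_indicator measurableSet_Ioo Φ]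
  have heq : ∀ u, (Ioo 0 C).indicator (fun u => Φ (k * u)) u
      = ((Ioo 0 (k * C)).indicator Φ) (k * u) := by
    intro u
    by_cases hu : u ∈ Ioo 0 C
    · rw [Set.indicator_of_mem hu, Set.indicator_of_mem]
      · exact ⟨mul_pos hk hu.1, by nlinarith [hu.2]⟩
    · rw [Set.indicator_of_notMem hu, Set.indicator_of_notMem]
      intro hmem
      refine hu ⟨?_, ?_⟩
      · nlinarith [hmem.1]
      · nlinarith [hmem.2]
  simp_rw [heq]
  exact lintegral_comp_mul_left' hk (hΦ.indicator measurableSet_Ioo)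

end scale

/-- One-dimensional Prékopa–Leindler inequality. -/
theorem prekopa_leindler_dim1 {l : ℝ} (hl0 : 0 < l) (hl1 : l < 1)
    {F₁ F₂ F : ℝ → ℝ}
    (h₁i : Integrable F₁) (h₂i : Integrable F₂) (hFi : Integrable F)
    (h₁0 : ∀ t, 0 ≤ F₁ t) (h₂0 : ∀ t, 0 ≤ F₂ t) (hF0 : ∀ t, 0 ≤ F t)
    (hb₁ : BddAbove (Set.range F₁)) (hb₂ : BddAbove (Set.range F₂))
    (hyp : ∀ a b, F₁ a ^ l * F₂ b ^ (1 - l) ≤ F (l * a + (1 - l) * b)) :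
    (∫ t, F₁ t) ^ l * (∫ t, F₂ t) ^ (1 - l) ≤ ∫ t, F t := by
  have hl1' : (0:ℝ) < 1 - l := by linarith
  set S₁ := sSup (Set.range F₁) with hS₁def
  set S₂ := sSup (Set.range F₂) with hS₂def
  have hS₁ub : ∀ t, F₁ t ≤ S₁ := fun t => le_csSup hb₁ (mem_range_self t)
  have hS₂ub : ∀ t, F₂ t ≤ S₂ := fun t => le_csSup hb₂ (mem_range_self t)
  by_cases hS₁ : S₁ ≤ 0
  · have hz : ∀ t, F₁ t = 0 := fun t => le_antisymm ((hS₁ub t).trans hS₁) (h₁0 t)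
    have : (∫ t, F₁ t) = 0 := by simp only [hz, integral_zero]
    rw [this, Real.zero_rpow hl0.ne', zero_mul]
    exact integral_nonneg hF0
  by_cases hS₂ : S₂ ≤ 0
  · have hz : ∀ t, F₂ t = 0 := fun t => le_antisymm ((hS₂ub t).trans hS₂) (h₂0 t)
    have : (∫ t, F₂ t) = 0 := by simp only [hz, integral_zero]
    rw [this, Real.zero_rpow hl1'.ne', mul_zero]
    exact integral_nonneg hF0
  push_neg at hS₁ hS₂
  set C := S₁ ^ l * S₂ ^ (1 - l) with hCdef
  have hC0 : 0 < C := mul_pos (Real.rpow_pos_of_pos hS₁ l) (Real.rpow_pos_of_pos hS₂ (1 - l))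
  -- measurable modifications
  have hae₁ : AEMeasurable F₁ volume := h₁i.aemeasurable
  have hae₂ : AEMeasurable F₂ volume := h₂i.aemeasurable
  set G₁ := hae₁.mk F₁ with hG₁def
  set G₂ := hae₂.mk F₂ with hG₂def
  have hG₁m : Measurable G₁ := hae₁.measurable_mk
  have hG₂m : Measurable G₂ := hae₂.measurable_mk
  have heq₁ : F₁ =ᵐ[volume] G₁ := hae₁.ae_eq_mk
  have heq₂ : F₂ =ᵐ[volume] G₂ := hae₂.ae_eq_mk
  set Z₁ := toMeasurable volume {t | F₁ t ≠ G₁ t} with hZ₁def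
  set Z₂ := toMeasurable volume {t | F₂ t ≠ G₂ t} with hZ₂def
  have hZ₁m : MeasurableSet Z₁ := measurableSet_toMeasurable _ _
  have hZ₂m : MeasurableSet Z₂ := measurableSet_toMeasurable _ _
  have hZ₁0 : volume Z₁ = 0 := by
    rw [hZ₁def, measure_toMeasurable]; exact heq₁
  have hZ₂0 : volume Z₂ = 0 := by
    rw [hZ₂def, measure_toMeasurable]; exact heq₂
  have hG₁i : Integrable G₁ := h₁i.congr heq₁
  have hG₂i : Integrable G₂ := h₂i.congr heq₂
  -- the key level-set measure inequality
  have key : ∀ s : ℝ, 0 < s → s < 1 →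
      ENNReal.ofReal l * volume {t | S₁ * s < F₁ t}
        + ENNReal.ofReal (1 - l) * volume {t | S₂ * s < F₂ t}
      ≤ volume {t | C * s < F t} := by
    intro s hs0 hs1
    obtain ⟨a₀, ha₀⟩ : ∃ a, S₁ * s < F₁ a := by
      have h1 : S₁ * s < S₁ := by nlinarith
      obtain ⟨y, ⟨a, rfl⟩, hy⟩ := exists_lt_of_lt_csSup (Set.range_nonempty F₁) h1
      exact ⟨a, hy⟩
    obtain ⟨b₀, hb₀⟩ : ∃ b, S₂ * s < F₂ b := by
      have h1 : S₂ * s < S₂ := by nlinarith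
      obtain ⟨y, ⟨b, rfl⟩, hy⟩ := exists_lt_of_lt_csSup (Set.range_nonempty F₂) h1
      exact ⟨b, hy⟩
    set A := ({t | S₁ * s < G₁ t} \ Z₁) ∪ {a₀} with hAdef
    set B := ({t | S₂ * s < G₂ t} \ Z₂) ∪ {b₀} with hBdef
    have hAm : MeasurableSet A :=
      (((measurableSet_lt measurable_const hG₁m).diff hZ₁m)).union (measurableSet_singleton _)
    have hBm : MeasurableSet B :=
      (((measurableSet_lt measurable_const hG₂m).diff hZ₂m)).union (measurableSet_singleton _)
    have hAsub : ∀ t ∈ A, S₁ * s < F₁ t := by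
      rintro t (⟨ht, htZ⟩ | rfl)
      · have : F₁ t = G₁ t := by
          by_contra hne
          exact htZ (subset_toMeasurable _ _ hne)
        rw [this]; exact ht
      · exact ha₀
    have hBsub : ∀ t ∈ B, S₂ * s < F₂ t := by
      rintro t (⟨ht, htZ⟩ | rfl)
      · have : F₂ t = G₂ t := by
          by_contra hne
          exact htZ (subset_toMeasurable _ _ hne)
        rw [this]; exact ht
      · exact hb₀
    have hset₁ : volume {t | S₁ * s < F₁ t} = volume {t | S₁ * s < G₁ t} := by
      apply measure_congr
      filter_upwards [heq₁] with t ht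
      change (S₁ * s < F₁ t) = (S₁ * s < G₁ t)
      rw [ht]
    have hset₂ : volume {t | S₂ * s < F₂ t} = volume {t | S₂ * s < G₂ t} := by
      apply measure_congr
      filter_upwards [heq₂] with t ht
      change (S₂ * s < F₂ t) = (S₂ * s < G₂ t)
      rw [ht]
    have hvolA : volume {t | S₁ * s < F₁ t} ≤ volume A := by
      rw [hset₁, ← measure_diff_null hZ₁0]
      exact measure_mono subset_union_left
    have hvolB : volume {t | S₂ * s < F₂ t} ≤ volume B := by
      rw [hset₂, ← measure_diff_null hZ₂0]
      exact measure_mono subset_union_left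
    have hAfin : volume A ≠ ⊤ := by
      have h1 : volume A ≤ volume {t | S₁ * s < G₁ t} + volume {a₀} :=
        (measure_union_le _ _).trans (by gcongr; exact diff_subset)
      have h2 : volume {t | S₁ * s < G₁ t} < ⊤ := hG₁i.measure_gt_lt_top (mul_pos hS₁ hs0)
      exact (h1.trans_lt (by simpa using h2)).ne
    have hBfin : volume B ≠ ⊤ := by
      have h1 : volume B ≤ volume {t | S₂ * s < G₂ t} + volume {b₀} :=
        (measure_union_le _ _).trans (by gcongr; exact diff_subset)
      have h2 : volume {t | S₂ * s < G₂ t} < ⊤ := hG₂i.measure_gt_lt_top (mul_pos hS₂ hs0)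
      exact (h1.trans_lt (by simpa using h2)).ne
    calc ENNReal.ofReal l * volume {t | S₁ * s < F₁ t}
          + ENNReal.ofReal (1 - l) * volume {t | S₂ * s < F₂ t}
        ≤ ENNReal.ofReal l * volume A + ENNReal.ofReal (1 - l) * volume B := by gcongr
      _ ≤ volume {t | C * s < F t} := by
          apply core_measure hl0 hl1 _ hAm hBm ⟨a₀, Or.inr rfl⟩ ⟨b₀, Or.inr rfl⟩ hAfin hBfin
          intro a ha b hb
          have haa : S₁ * s < F₁ a := hAsub a ha
          have hbb : S₂ * s < F₂ b := hBsub b hb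
          have hcs : C * s = (S₁ * s) ^ l * (S₂ * s) ^ (1 - l) := by
            rw [Real.mul_rpow hS₁.le hs0.le, Real.mul_rpow hS₂.le hs0.le]
            have hss : s ^ l * s ^ (1 - l) = s := by
              rw [← Real.rpow_add hs0]; norm_num
            calc C * s = (S₁ ^ l * S₂ ^ (1 - l)) * (s ^ l * s ^ (1 - l)) := by rw [hss]
              _ = S₁ ^ l * s ^ l * (S₂ ^ (1 - l) * s ^ (1 - l)) := by ring
          show C * s < F (l * a + (1 - l) * b)
          calc C * s = (S₁ * s) ^ l * (S₂ * s) ^ (1 - l) := hcs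
            _ < F₁ a ^ l * F₂ b ^ (1 - l) := by
                apply mul_lt_mul'' (Real.rpow_lt_rpow (by positivity) haa hl0)
                  (Real.rpow_lt_rpow (by positivity) hbb hl1') (by positivity) (by positivity)
            _ ≤ F (l * a + (1 - l) * b) := hyp a b
  -- layer cake representations
  have lcF : ENNReal.ofReal (∫ t, F t) = ∫⁻ u in Ioi (0:ℝ), volume {t | u < F t} := by
    rw [ofReal_integral_eq_lintegral_ofReal hFi (ae_of_all _ hF0)]
    exact lintegral_eq_lintegral_meas_lt volume (ae_of_all _ hF0) hFi.aemeasurable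
  set Φ₁ : ℝ → ℝ≥0∞ := fun v => volume {t | v < F₁ t} with hΦ₁def
  set Φ₂ : ℝ → ℝ≥0∞ := fun v => volume {t | v < F₂ t} with hΦ₂def
  have hΦ₁anti : Antitone Φ₁ := fun u v huv =>
    measure_mono (fun t ht => lt_of_le_of_lt huv ht)
  have hΦ₂anti : Antitone Φ₂ := fun u v huv =>
    measure_mono (fun t ht => lt_of_le_of_lt huv ht)
  have hΦ₁m : Measurable Φ₁ := hΦ₁anti.measurable
  have hΦ₂m : Measurable Φ₂ := hΦ₂anti.measurable
  have lc₁ : ENNReal.ofReal (∫ t, F₁ t) = ∫⁻ v in Ioo 0 S₁, Φ₁ v := by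
    rw [ofReal_integral_eq_lintegral_ofReal h₁i (ae_of_all _ h₁0),
      lintegral_eq_lintegral_meas_lt volume (ae_of_all _ h₁0) h₁i.aemeasurable,
      ← Ioo_union_Ici_eq_Ioi hS₁, lintegral_union measurableSet_Ici
        (by rw [Set.disjoint_left]; intro v hv hv'; exact absurd hv' (not_le.mpr hv.2).elim)]
    have hzero : ∫⁻ v in Ici S₁, Φ₁ v = 0 := by
      rw [setLIntegral_congr_fun measurableSet_Ici
        (fun v hv => ?_), lintegral_zero]
      have : {t | v < F₁ t} = ∅ := by
        ext t; simp only [Set.mem_setOf_eq, Set.mem_empty_iff_false, iff_false, not_lt]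
        exact (hS₁ub t).trans hv
      show Φ₁ v = (fun _ => (0:ℝ≥0∞)) v
      simp only [hΦ₁def, this, measure_empty]
    rw [hzero, add_zero]
  have lc₂ : ENNReal.ofReal (∫ t, F₂ t) = ∫⁻ v in Ioo 0 S₂, Φ₂ v := by
    rw [ofReal_integral_eq_lintegral_ofReal h₂i (ae_of_all _ h₂0),
      lintegral_eq_lintegral_meas_lt volume (ae_of_all _ h₂0) h₂i.aemeasurable,
      ← Ioo_union_Ici_eq_Ioi hS₂, lintegral_union measurableSet_Ici
        (by rw [Set.disjoint_left]; intro v hv hv'; exact absurd hv' (not_le.mpr hv.2).elim)]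
    have hzero : ∫⁻ v in Ici S₂, Φ₂ v = 0 := by
      rw [setLIntegral_congr_fun measurableSet_Ici
        (fun v hv => ?_), lintegral_zero]
      have : {t | v < F₂ t} = ∅ := by
        ext t; simp only [Set.mem_setOf_eq, Set.mem_empty_iff_false, iff_false, not_lt]
        exact (hS₂ub t).trans hv
      show Φ₂ v = (fun _ => (0:ℝ≥0∞)) v
      simp only [hΦ₂def, this, measure_empty]
    rw [hzero, add_zero]
  -- main chain
  have hk₁ : (0:ℝ) < S₁ / C := div_pos hS₁ hC0
  have hk₂ : (0:ℝ) < S₂ / C := div_pos hS₂ hC0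
  have main : ENNReal.ofReal l * (ENNReal.ofReal (C / S₁) * ENNReal.ofReal (∫ t, F₁ t))
      + ENNReal.ofReal (1 - l) * (ENNReal.ofReal (C / S₂) * ENNReal.ofReal (∫ t, F₂ t))
      ≤ ENNReal.ofReal (∫ t, F t) := by
    rw [lcF, lc₁, lc₂]
    have sub₁ : ENNReal.ofReal (C / S₁) * ∫⁻ v in Ioo 0 S₁, Φ₁ v
        = ∫⁻ u in Ioo 0 C, Φ₁ (S₁ / C * u) := by
      rw [setLIntegral_comp_mul hk₁ hC0 hΦ₁m]
      rw [show S₁ / C * C = S₁ by field_simp, inv_div]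
    have sub₂ : ENNReal.ofReal (C / S₂) * ∫⁻ v in Ioo 0 S₂, Φ₂ v
        = ∫⁻ u in Ioo 0 C, Φ₂ (S₂ / C * u) := by
      rw [setLIntegral_comp_mul hk₂ hC0 hΦ₂m]
      rw [show S₂ / C * C = S₂ by field_simp, inv_div]
    have hm₁ : Measurable (fun u => Φ₁ (S₁ / C * u)) := hΦ₁m.comp (measurable_const_mul _)
    have hm₂ : Measurable (fun u => Φ₂ (S₂ / C * u)) := hΦ₂m.comp (measurable_const_mul _)
    rw [sub₁, sub₂, ← lintegral_const_mul _ hm₁, ← lintegral_const_mul _ hm₂,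
      ← lintegral_add_left (hm₁.const_mul _)]
    calc ∫⁻ u in Ioo 0 C, (ENNReal.ofReal l * Φ₁ (S₁ / C * u)
            + ENNReal.ofReal (1 - l) * Φ₂ (S₂ / C * u))
        ≤ ∫⁻ u in Ioo 0 C, volume {t | u < F t} := by
          have hGm : Measurable (fun u : ℝ => volume {t | u < F t}) :=
            Antitone.measurable (fun u v huv => measure_mono (fun t ht => lt_of_le_of_lt huv ht))
          apply setLIntegral_mono hGm
          intro u hu
          have hk := key (u / C) (div_pos hu.1 hC0) ((div_lt_one hC0).mpr hu.2)
          rw [show S₁ * (u / C) = S₁ / C * u by ring, show S₂ * (u / C) = S₂ / C * u by ring,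
            show C * (u / C) = u by field_simp] at hk
          exact hk
      _ ≤ ∫⁻ u in Ioi 0, volume {t | u < F t} :=
          lintegral_mono' (Measure.restrict_mono Ioo_subset_Ioi_self le_rfl) le_rfl
  -- back to the reals
  have hI₁0 : 0 ≤ ∫ t, F₁ t := integral_nonneg h₁0
  have hI₂0 : 0 ≤ ∫ t, F₂ t := integral_nonneg h₂0
  have hreal : l * (C / S₁) * (∫ t, F₁ t) + (1 - l) * (C / S₂) * (∫ t, F₂ t) ≤ ∫ t, F t := by
    have e1 : ENNReal.ofReal (l * (C / S₁) * (∫ t, F₁ t))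
        = ENNReal.ofReal l * (ENNReal.ofReal (C / S₁) * ENNReal.ofReal (∫ t, F₁ t)) := by
      rw [ENNReal.ofReal_mul (by positivity), ENNReal.ofReal_mul hl0.le, mul_assoc]
    have e2 : ENNReal.ofReal ((1 - l) * (C / S₂) * (∫ t, F₂ t))
        = ENNReal.ofReal (1 - l) * (ENNReal.ofReal (C / S₂) * ENNReal.ofReal (∫ t, F₂ t)) := by
      rw [ENNReal.ofReal_mul (by positivity), ENNReal.ofReal_mul hl1'.le, mul_assoc]
    have h1 : ENNReal.ofReal (l * (C / S₁) * (∫ t, F₁ t) + (1 - l) * (C / S₂) * (∫ t, F₂ t))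
        ≤ ENNReal.ofReal (∫ t, F t) := by
      rw [ENNReal.ofReal_add (by positivity) (by positivity), e1, e2]
      exact main
    exact (ENNReal.ofReal_le_ofReal_iff (integral_nonneg hF0)).mp h1
  have hgm := Real.geom_mean_le_arith_mean2_weighted hl0.le hl1'.le
    (div_nonneg hI₁0 hS₁.le) (div_nonneg hI₂0 hS₂.le) (by ring : l + (1 - l) = 1)
  calc (∫ t, F₁ t) ^ l * (∫ t, F₂ t) ^ (1 - l)
      = C * (((∫ t, F₁ t) / S₁) ^ l * (((∫ t, F₂ t) / S₂) ^ (1 - l))) := by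
        rw [Real.div_rpow hI₁0 hS₁.le, Real.div_rpow hI₂0 hS₂.le, hCdef]
        have n₁ : S₁ ^ l ≠ 0 := (Real.rpow_pos_of_pos hS₁ l).ne'
        have n₂ : S₂ ^ (1 - l) ≠ 0 := (Real.rpow_pos_of_pos hS₂ (1 - l)).ne'
        field_simp
        try ring
    _ ≤ C * (l * ((∫ t, F₁ t) / S₁) + (1 - l) * ((∫ t, F₂ t) / S₂)) :=
        mul_le_mul_of_nonneg_left hgm hC0.le
    _ = l * (C / S₁) * (∫ t, F₁ t) + (1 - l) * (C / S₂) * (∫ t, F₂ t) := by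
        field_simp
        try ring
    _ ≤ ∫ t, F t := hreal

/-- An integrable log-concave function on `ℝ` is (globally) bounded above. -/
lemma logConcave_bddAbove (f : ℝ → ℝ) (hf_int : Integrable f)
    (hf : LogConcaveOn Set.univ f) : ∃ M : ℝ, 0 < M ∧ ∀ x, f x ≤ M := by
  have hnn : ∀ x, 0 ≤ f x := fun x => hf.1 x trivial
  have hcc : ∀ x y (l : ℝ), 0 ≤ l → l ≤ 1 →
      f x ^ l * f y ^ (1 - l) ≤ f (l * x + (1 - l) * y) :=
    fun x y l h0 h1 => hf.2 x trivial y trivial l h0 h1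
  by_cases hsub : ∃ a b : ℝ, a < b ∧ 0 < f a ∧ 0 < f b
  swap
  · by_cases hp : ∃ p, 0 < f p
    · obtain ⟨p, hp⟩ := hp
      refine ⟨f p + 1, by linarith, fun x => ?_⟩
      by_cases hx : 0 < f x
      · rcases lt_trichotomy x p with h | h | h
        · exact absurd ⟨x, p, h, hx, hp⟩ hsub
        · rw [h]; linarith
        · exact absurd ⟨p, x, h, hp, hx⟩ hsub
      · push_neg at hx; linarith
    · push_neg at hp
      exact ⟨1, one_pos, fun x => by linarith [hp x]⟩
  obtain ⟨a, b, hab, hfa, hfb⟩ := hsub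
  set c₀ := min (f a) (f b) with hc₀def
  have hc₀ : 0 < c₀ := lt_min hfa hfb
  -- log-concavity propagates the lower bound `c₀` along segments
  have hseg : ∀ u v w : ℝ, u ≤ w → w ≤ v → c₀ ≤ f u → c₀ ≤ f v → c₀ ≤ f w := by
    intro u v w huw hwv hu hv
    rcases eq_or_lt_of_le (huw.trans hwv) with heq | huv
    · have hwu : w = u := le_antisymm (heq ▸ hwv) huw
      rwa [hwu]
    · set μ := (v - w) / (v - u) with hμdef
      have h1 : 0 ≤ μ := div_nonneg (by linarith) (by linarith)
      have h2 : μ ≤ 1 := by rw [div_le_one (by linarith)]; linarith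
      have h3 : μ * u + (1 - μ) * v = w := by
        have hvu : v - u ≠ 0 := by linarith
        rw [hμdef]; field_simp; ring
      have h4 := hcc u v μ h1 h2
      rw [h3] at h4
      calc c₀ = c₀ ^ μ * c₀ ^ (1 - μ) := by rw [← Real.rpow_add hc₀]; norm_num
        _ ≤ f u ^ μ * f v ^ (1 - μ) :=
            mul_le_mul (Real.rpow_le_rpow hc₀.le hu h1)
              (Real.rpow_le_rpow hc₀.le hv (by linarith))
              (Real.rpow_nonneg hc₀.le _) (Real.rpow_nonneg (hnn u) _)
        _ ≤ f w := h4
  set I := ∫ t, f t with hIdef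
  have hI0 : 0 ≤ I := integral_nonneg hnn
  have hIc : ∀ u v : ℝ, u ≤ v → c₀ ≤ f u → c₀ ≤ f v → c₀ * (v - u) ≤ I := by
    intro u v huv hu hv
    have h1 : ∀ w ∈ Icc u v, c₀ ≤ f w := fun w hw => hseg u v w hw.1 hw.2 hu hv
    calc c₀ * (v - u) = ∫ _ in Icc u v, c₀ := by
          rw [setIntegral_const, measureReal_def, Real.volume_Icc, ENNReal.toReal_ofReal (by linarith)]
          rw [smul_eq_mul, mul_comm]
      _ ≤ ∫ w in Icc u v, f w := by
          apply setIntegral_mono_on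
            (integrableOn_const (by rw [Real.volume_Icc]; exact ENNReal.ofReal_ne_top))
            hf_int.integrableOn measurableSet_Icc h1
      _ ≤ I := setIntegral_le_integral hf_int (ae_of_all _ hnn)
  have hc₀a : c₀ ≤ f a := min_le_left _ _
  have hc₀b : c₀ ≤ f b := min_le_right _ _
  have hba : c₀ * (b - a) ≤ I := hIc a b hab.le hc₀a hc₀b
  have hId0 : 0 ≤ I / c₀ := div_nonneg hI0 hc₀.le
  set A' := b - I / c₀ - 1 with hA'def
  set B' := a + I / c₀ + 1 with hB'def
  have hbaI : b - a ≤ I / c₀ := by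
    rw [le_div_iff₀ hc₀]; linarith [hba]
  have hK : ∀ x, c₀ ≤ f x → A' ≤ x ∧ x ≤ B' := by
    intro x hx
    constructor
    · by_cases h : b ≤ x
      · rw [hA'def]; linarith
      · push_neg at h
        have := hIc x b h.le hx hc₀b
        have h2 : b - x ≤ I / c₀ := by rw [le_div_iff₀ hc₀]; linarith
        rw [hA'def]; linarith
    · by_cases h : x ≤ a
      · rw [hB'def]; linarith
      · push_neg at h
        have := hIc a x h.le hc₀a hx
        have h2 : x - a ≤ I / c₀ := by rw [le_div_iff₀ hc₀]; linarith
        rw [hB'def]; linarith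
  set m := (a + b) / 2 with hmdef
  have ham : a < m := by rw [hmdef]; linarith
  have hmb : m < b := by rw [hmdef]; linarith
  have hfm : c₀ ≤ f m := hseg a b m ham.le hmb.le hc₀a hc₀b
  have hA'm : A' < m := by rw [hA'def]; linarith
  have hmB' : m < B' := by rw [hB'def]; linarith
  set c₁ := min (f a) 1 with hc₁def
  have hc₁0 : 0 < c₁ := lt_min hfa one_pos
  have hc₁1 : c₁ ≤ 1 := min_le_right _ _
  set c₂ := min (f b) 1 with hc₂def
  have hc₂0 : 0 < c₂ := lt_min hfb one_pos
  have hc₂1 : c₂ ≤ 1 := min_le_right _ _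
  set Cv := max (f m / c₁) 1 with hCvdef
  have hCv1 : 1 ≤ Cv := le_max_right _ _
  set Cw := max (f m / c₂) 1 with hCwdef
  have hCw1 : 1 ≤ Cw := le_max_right _ _
  set l₀ := (m - a) / (B' - a) with hl₀def
  have hl₀ : 0 < l₀ := div_pos (by linarith) (by linarith)
  set l₁ := (b - m) / (b - A') with hl₁def
  have hl₁ : 0 < l₁ := div_pos (by linarith) (by linarith)
  have hP1 : 0 ≤ Cv ^ l₀⁻¹ := Real.rpow_nonneg (by linarith) _
  have hP2 : 0 ≤ Cw ^ l₁⁻¹ := Real.rpow_nonneg (by linarith) _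
  refine ⟨f m + Cv ^ l₀⁻¹ + Cw ^ l₁⁻¹ + c₀ + 1, by linarith [hP1, hP2, hnn m, hc₀], fun x => ?_⟩
  by_cases hcx : c₀ ≤ f x
  swap
  · push_neg at hcx; linarith [hP1, hP2, hnn m, hc₀, hfm]
  obtain ⟨hxA, hxB⟩ := hK x hcx
  rcases lt_trichotomy x m with hxm | hxm | hxm
  · -- x < m : interpolate between x and b, hitting m
    set μ := (b - m) / (b - x) with hμdef
    have hbx : x < b := by linarith
    have hμ0 : 0 < μ := div_pos (by linarith) (by linarith)
    have hμ1 : μ < 1 := by rw [div_lt_one (by linarith)]; linarith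
    have hcomb : μ * x + (1 - μ) * b = m := by
      have hbx' : b - x ≠ 0 := by linarith
      rw [hμdef]; field_simp; ring
    have h1 := hcc x b μ hμ0.le hμ1.le
    rw [hcomb] at h1
    have h2 : c₂ ≤ f b ^ (1 - μ) := by
      calc c₂ = c₂ ^ (1 : ℝ) := (Real.rpow_one _).symm
        _ ≤ c₂ ^ (1 - μ) := Real.rpow_le_rpow_of_exponent_ge hc₂0 hc₂1 (by linarith)
        _ ≤ f b ^ (1 - μ) := Real.rpow_le_rpow hc₂0.le (min_le_left _ _) (by linarith)
    have h3 : f x ^ μ * c₂ ≤ f m :=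
      le_trans (mul_le_mul_of_nonneg_left h2 (Real.rpow_nonneg (hnn x) μ)) h1
    have h4 : f x ^ μ ≤ Cw :=
      le_trans (le_trans ((le_div_iff₀ hc₂0).mpr h3) le_rfl) (le_max_left _ _)
    by_cases hfx1 : f x ≤ 1
    · linarith [hP1, hP2, hnn m, hc₀, hfm]
    · push_neg at hfx1
      have hl₁μ : l₁ ≤ μ := by
        rw [hl₁def, hμdef, div_le_div_iff₀ (by linarith) (by linarith)]
        nlinarith
      have h5 : μ⁻¹ ≤ l₁⁻¹ := by
        apply inv_anti₀ hl₁ hl₁μ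
      have h6 : f x ≤ Cw ^ l₁⁻¹ := by
        calc f x = (f x ^ μ) ^ μ⁻¹ := (Real.rpow_rpow_inv (hnn x) hμ0.ne').symm
          _ ≤ Cw ^ μ⁻¹ :=
              Real.rpow_le_rpow (Real.rpow_nonneg (hnn x) μ) h4 (inv_nonneg.mpr hμ0.le)
          _ ≤ Cw ^ l₁⁻¹ := Real.rpow_le_rpow_of_exponent_le hCw1 h5
      linarith [hP1, hP2, hnn m, hc₀, hfm]
  · rw [hxm]; linarith [hP1, hP2, hnn m, hc₀, hfm]
  · -- m < x : interpolate between x and a, hitting m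
    set μ := (m - a) / (x - a) with hμdef
    have hax : a < x := by linarith
    have hμ0 : 0 < μ := div_pos (by linarith) (by linarith)
    have hμ1 : μ < 1 := by rw [div_lt_one (by linarith)]; linarith
    have hcomb : μ * x + (1 - μ) * a = m := by
      have hax' : x - a ≠ 0 := by linarith
      rw [hμdef]; field_simp; ring
    have h1 := hcc x a μ hμ0.le hμ1.le
    rw [hcomb] at h1
    have h2 : c₁ ≤ f a ^ (1 - μ) := by
      calc c₁ = c₁ ^ (1 : ℝ) := (Real.rpow_one _).symm
        _ ≤ c₁ ^ (1 - μ) := Real.rpow_le_rpow_of_exponent_ge hc₁0 hc₁1 (by linarith)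
        _ ≤ f a ^ (1 - μ) := Real.rpow_le_rpow hc₁0.le (min_le_left _ _) (by linarith)
    have h3 : f x ^ μ * c₁ ≤ f m :=
      le_trans (mul_le_mul_of_nonneg_left h2 (Real.rpow_nonneg (hnn x) μ)) h1
    have h4 : f x ^ μ ≤ Cv :=
      le_trans (le_trans ((le_div_iff₀ hc₁0).mpr h3) le_rfl) (le_max_left _ _)
    by_cases hfx1 : f x ≤ 1
    · linarith [hP1, hP2, hnn m, hc₀, hfm]
    · push_neg at hfx1
      have hl₀μ : l₀ ≤ μ := by
        rw [hl₀def, hμdef, div_le_div_iff₀ (by linarith) (by linarith)]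
        nlinarith
      have h5 : μ⁻¹ ≤ l₀⁻¹ := by
        apply inv_anti₀ hl₀ hl₀μ
      have h6 : f x ≤ Cv ^ l₀⁻¹ := by
        calc f x = (f x ^ μ) ^ μ⁻¹ := (Real.rpow_rpow_inv (hnn x) hμ0.ne').symm
          _ ≤ Cv ^ μ⁻¹ :=
              Real.rpow_le_rpow (Real.rpow_nonneg (hnn x) μ) h4 (inv_nonneg.mpr hμ0.le)
          _ ≤ Cv ^ l₀⁻¹ := Real.rpow_le_rpow_of_exponent_le hCv1 h5
      linarith [hP1, hP2, hnn m, hc₀, hfm]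

/-- The convolution of two integrable log-concave functions is log-concave. -/
theorem conv_log_concave (f g : ℝ → ℝ)
    (hf_int : Integrable f) (hg_int : Integrable g)
    (hf : LogConcaveOn Set.univ f) (hg : LogConcaveOn Set.univ g) :
    LogConcaveOn Set.univ (conv f g) := by
  have hnnf : ∀ x, 0 ≤ f x := fun x => hf.1 x trivial
  have hnng : ∀ x, 0 ≤ g x := fun x => hg.1 x trivial
  obtain ⟨Mf, hMf0, hMf⟩ := logConcave_bddAbove f hf_int hf
  obtain ⟨Mg, hMg0, hMg⟩ := logConcave_bddAbove g hg_int hg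
  have hint : ∀ c : ℝ, Integrable (fun τ => f (c - τ) * g τ) := by
    intro c
    have h1 : Integrable (fun τ => f (c - τ)) := (integrable_comp_sub_left f c).mpr hf_int
    apply Integrable.mono' (hg_int.const_mul Mf)
      (h1.aestronglyMeasurable.mul hg_int.aestronglyMeasurable)
    refine Filter.Eventually.of_forall fun τ => ?_
    show ‖f (c - τ) * g τ‖ ≤ Mf * g τ
    rw [Real.norm_eq_abs, abs_of_nonneg (mul_nonneg (hnnf _) (hnng _))]
    exact mul_le_mul_of_nonneg_right (hMf _) (hnng τ)
  have hnn_conv : ∀ x, 0 ≤ conv f g x := fun x =>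
    integral_nonneg fun τ => mul_nonneg (hnnf _) (hnng _)
  constructor
  · exact fun x _ => hnn_conv x
  intro x _ y _ l hl0 hl1
  rcases eq_or_lt_of_le hl0 with heq | hl0'
  · rw [← heq]; norm_num
  rcases eq_or_lt_of_le hl1 with heq | hl1'
  · rw [heq]; norm_num
  have hbd₁ : BddAbove (Set.range fun τ => f (x - τ) * g τ) := by
    refine ⟨Mf * Mg, ?_⟩
    rintro _ ⟨τ, rfl⟩
    exact mul_le_mul (hMf _) (hMg _) (hnng _) hMf0.le
  have hbd₂ : BddAbove (Set.range fun τ => f (y - τ) * g τ) := by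
    refine ⟨Mf * Mg, ?_⟩
    rintro _ ⟨τ, rfl⟩
    exact mul_le_mul (hMf _) (hMg _) (hnng _) hMf0.le
  have hyp : ∀ a b : ℝ, (f (x - a) * g a) ^ l * (f (y - b) * g b) ^ (1 - l)
      ≤ f (l * x + (1 - l) * y - (l * a + (1 - l) * b)) * g (l * a + (1 - l) * b) := by
    intro a b
    rw [Real.mul_rpow (hnnf _) (hnng _), Real.mul_rpow (hnnf _) (hnng _)]
    have e : l * (x - a) + (1 - l) * (y - b) = l * x + (1 - l) * y - (l * a + (1 - l) * b) := by
      ring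
    calc f (x - a) ^ l * g a ^ l * (f (y - b) ^ (1 - l) * g b ^ (1 - l))
        = (f (x - a) ^ l * f (y - b) ^ (1 - l)) * (g a ^ l * g b ^ (1 - l)) := by ring
      _ ≤ f (l * (x - a) + (1 - l) * (y - b)) * g (l * a + (1 - l) * b) := by
          apply mul_le_mul (hf.2 _ trivial _ trivial l hl0 hl1)
            (hg.2 _ trivial _ trivial l hl0 hl1)
            (mul_nonneg (Real.rpow_nonneg (hnng _) _) (Real.rpow_nonneg (hnng _) _))
            (hnnf _)
      _ = _ := by rw [e]
  have key := prekopa_leindler_dim1 hl0' hl1' (hint x) (hint y)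
    (hint (l * x + (1 - l) * y)) (fun τ => mul_nonneg (hnnf _) (hnng _))
    (fun τ => mul_nonneg (hnnf _) (hnng _)) (fun τ => mul_nonneg (hnnf _) (hnng _))
    hbd₁ hbd₂ hyp
  exact key

end PrekopaLeindler
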